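/- Let A ∈ ℝ^{n×n}, C ∈ ℝ^{q×n}, F ∈ ℝ^{r×n} with rank(F) = r, let O be the observability matrix of (C, A), and let W(t₁) be the observability Gramian for some t₁ > 0. If the images F(Im W(t₁)) and F(Ker W(t₁)) are orthogonal in ℝ^r, then rank([O; F]) = rank(O) holds if and only if rank(F·Oᵀ) = rank(F); that is, under the orthogonality condition, the system (C, A; F) is functionally observable if and only if the dual system (Aᵀ, Cᵀ; F) is output controllable (strong duality, Theorem 2). -/

import Mathlib

open Matrix intervalIntegral

/-- Observability matrix of the pair `(C, A)`: the vertical block stack of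
`C, C*A, C*A², …, C*A^(n-1)`, indexed so that entry `((k, i), j)` is `(C * A^k) i j`. -/
noncomputable def obsMat {n q : ℕ} (C : Matrix (Fin q) (Fin n) ℝ)
    (A : Matrix (Fin n) (Fin n) ℝ) : Matrix (Fin n × Fin q) (Fin n) ℝ :=
  fun ki j => (C * A ^ (ki.1 : ℕ)) ki.2 j

/-- Observability Gramian `W(t₁) = ∫₀^{t₁} exp(Aᵀτ) Cᵀ C exp(Aτ) dτ` (entrywise integral). -/
noncomputable def obsGram {n q : ℕ} (A : Matrix (Fin n) (Fin n) ℝ)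
    (C : Matrix (Fin q) (Fin n) ℝ) (t₁ : ℝ) : Matrix (Fin n) (Fin n) ℝ :=
  fun i j => ∫ τ in (0:ℝ)..t₁,
    (NormedSpace.exp (τ • Aᵀ) * Cᵀ * C * NormedSpace.exp (τ • A)) i j

set_option linter.unusedSectionVars false

namespace StrongDualityAux

open Matrix LinearMap Module Submodule NormedSpace Nat

section Polar


variable {ι κ : Type*} [Fintype ι] [Fintype κ] [DecidableEq ι] [DecidableEq κ]

/-- The "polar" (orthogonal annihilator w.r.t. the dot product) of a subspace of `ι → ℝ`. -/
def polar (U : Submodule ℝ (ι → ℝ)) : Submodule ℝ (ι → ℝ) where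
  carrier := {x | ∀ u ∈ U, x ⬝ᵥ u = 0}
  add_mem' := by intro x y hx hy u hu; simp [add_dotProduct, hx u hu, hy u hu]
  zero_mem' := by intro u hu; simp
  smul_mem' := by intro c x hx u hu; simp [smul_dotProduct, hx u hu]

lemma mem_polar {U : Submodule ℝ (ι → ℝ)} {x : ι → ℝ} :
    x ∈ polar U ↔ ∀ u ∈ U, x ⬝ᵥ u = 0 := Iff.rfl

lemma polar_antitone {U V : Submodule ℝ (ι → ℝ)} (h : U ≤ V) : polar V ≤ polar U :=
  fun _ hx u hu => hx u (h hu)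

lemma polar_range_mulVecLin (N : Matrix ι κ ℝ) :
    polar (range N.mulVecLin) = ker Nᵀ.mulVecLin := by
  ext x
  constructor
  · intro hx
    simp only [mem_ker, mulVecLin_apply]
    funext j
    have := hx (N *ᵥ Pi.single j 1) ⟨Pi.single j 1, rfl⟩
    rw [Matrix.dotProduct_mulVec, ← Matrix.mulVec_transpose] at this
    simpa [Matrix.mulVec, dotProduct_comm] using this
  · intro hx u hu
    obtain ⟨y, rfl⟩ := hu
    simp only [mulVecLin_apply]
    rw [Matrix.dotProduct_mulVec, ← Matrix.mulVec_transpose]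
    simp only [mem_ker, mulVecLin_apply] at hx
    rw [hx, zero_dotProduct]

lemma finrank_polar_add (U : Submodule ℝ (ι → ℝ)) :
    finrank ℝ U + finrank ℝ (polar U) = Fintype.card ι := by
  obtain ⟨S, hS⟩ : U.FG := IsNoetherian.noetherian U
  classical
  set N : Matrix ι S ℝ := fun i s => (s : ι → ℝ) i with hN
  have hrange : range N.mulVecLin = U := by
    rw [Matrix.range_mulVecLin, ← hS]
    congr 1
    ext v
    constructor
    · rintro ⟨s, rfl⟩; exact s.2
    · intro hv; exact ⟨⟨v, hv⟩, rfl⟩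
  have h1 : polar U = ker Nᵀ.mulVecLin := by rw [← hrange, polar_range_mulVecLin]
  have h2 : finrank ℝ (range Nᵀ.mulVecLin) + finrank ℝ (ker Nᵀ.mulVecLin)
      = Fintype.card ι := by
    simpa using LinearMap.finrank_range_add_finrank_ker Nᵀ.mulVecLin
  have h3 : finrank ℝ (range Nᵀ.mulVecLin) = finrank ℝ (range N.mulVecLin) := by
    have := Matrix.rank_transpose N
    simpa [Matrix.rank] using this
  rw [h1, ← hrange, ← h3]
  exact h2

lemma polar_polar (U : Submodule ℝ (ι → ℝ)) : polar (polar U) = U := by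
  have hle : U ≤ polar (polar U) := by
    intro u hu x hx
    rw [dotProduct_comm]
    exact hx u hu
  refine (Submodule.eq_of_le_of_finrank_eq hle ?_).symm
  have h1 := finrank_polar_add U
  have h2 := finrank_polar_add (polar U)
  omega

lemma range_transpose_eq_polar_ker (M : Matrix κ ι ℝ) :
    range Mᵀ.mulVecLin = polar (ker M.mulVecLin) := by
  have hle : range Mᵀ.mulVecLin ≤ polar (ker M.mulVecLin) := by
    rintro x ⟨u, rfl⟩ y hy
    simp only [mem_ker, mulVecLin_apply] at hy ⊢
    rw [Matrix.mulVec_transpose, ← Matrix.dotProduct_mulVec, hy, dotProduct_zero]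
  refine Submodule.eq_of_le_of_finrank_eq hle ?_
  have h1 : finrank ℝ (range Mᵀ.mulVecLin) = finrank ℝ (range M.mulVecLin) := by
    have := Matrix.rank_transpose M
    simpa [Matrix.rank] using this
  have h2 := LinearMap.finrank_range_add_finrank_ker M.mulVecLin
  have h3 := finrank_polar_add (ker M.mulVecLin)
  simp only [Module.finrank_pi, Fintype.card_fin] at h2
  omega


end Polar

section Rank


variable {n q r : ℕ}

lemma rank_fromRows_eq_iff (O : Matrix (Fin n × Fin q) (Fin n) ℝ) (F : Matrix (Fin r) (Fin n) ℝ) :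
    (Matrix.fromRows O F).rank = O.rank ↔ ker O.mulVecLin ≤ ker F.mulVecLin := by
  have hker : ker (Matrix.fromRows O F).mulVecLin = ker O.mulVecLin ⊓ ker F.mulVecLin := by
    ext x
    simp only [mem_ker, mulVecLin_apply, Submodule.mem_inf, Matrix.fromRows_mulVec]
    constructor
    · intro h
      constructor
      · funext i; exact congrFun h (Sum.inl i)
      · funext i; exact congrFun h (Sum.inr i)
    · rintro ⟨h1, h2⟩
      funext i
      cases i with
      | inl i => simpa using congrFun h1 i
      | inr i => simpa using congrFun h2 i
  have h1 : (Matrix.fromRows O F).rank + finrank ℝ (ker (Matrix.fromRows O F).mulVecLin)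
      = n := by
    simpa [Matrix.rank] using LinearMap.finrank_range_add_finrank_ker (Matrix.fromRows O F).mulVecLin
  have h2 : O.rank + finrank ℝ (ker O.mulVecLin) = n := by
    simpa [Matrix.rank] using LinearMap.finrank_range_add_finrank_ker O.mulVecLin
  rw [hker] at h1
  constructor
  · intro h
    have hfr : finrank ℝ (ker O.mulVecLin ⊓ ker F.mulVecLin : Submodule ℝ (Fin n → ℝ))
        = finrank ℝ (ker O.mulVecLin) := by omega
    have := Submodule.eq_of_le_of_finrank_eq inf_le_left hfr
    rw [inf_eq_left] at this
    exact this
  · intro h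
    have : ker O.mulVecLin ⊓ ker F.mulVecLin = ker O.mulVecLin := inf_eq_left.mpr h
    rw [this] at h1
    omega

lemma rank_mul_transpose_eq_iff (O : Matrix (Fin n × Fin q) (Fin n) ℝ)
    (F : Matrix (Fin r) (Fin n) ℝ) (hF : F.rank = r) :
    (F * Oᵀ).rank = F.rank ↔ Submodule.map F.mulVecLin (range Oᵀ.mulVecLin) = ⊤ := by
  have hrank : (F * Oᵀ).rank = finrank ℝ (Submodule.map F.mulVecLin (range Oᵀ.mulVecLin)) := by
    rw [Matrix.rank, Matrix.mulVecLin_mul, LinearMap.range_comp]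
  rw [hrank, hF]
  constructor
  · intro h
    apply Submodule.eq_top_of_finrank_eq
    simpa using h
  · intro h
    rw [h]
    simp

end Rank

section Analytic



attribute [local instance] Matrix.linftyOpNormedRing Matrix.linftyOpNormedAlgebra

variable {n q : ℕ} (A : Matrix (Fin n) (Fin n) ℝ) (C : Matrix (Fin q) (Fin n) ℝ)



lemma sum_mulVec {α : Type*} (s : Finset α) (M : α → Matrix (Fin q) (Fin n) ℝ)
    (v : Fin n → ℝ) : (∑ a ∈ s, M a) *ᵥ v = ∑ a ∈ s, (M a) *ᵥ v := by
  ext i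
  simp only [Matrix.mulVec, dotProduct, Matrix.sum_apply, Finset.sum_apply, Finset.sum_mul]
  exact Finset.sum_comm

lemma ch_extend (A : Matrix (Fin n) (Fin n) ℝ) (C : Matrix (Fin q) (Fin n) ℝ) (v : Fin n → ℝ)
    (h : ∀ k : ℕ, k < n → (C * A ^ k) *ᵥ v = 0) :
    ∀ k : ℕ, (C * A ^ k) *ᵥ v = 0 := by
  -- A ^ n as a combination of lower powers, by Cayley–Hamilton
  have hCH : A ^ n = ∑ i ∈ Finset.range n, (-(A.charpoly.coeff i)) • A ^ i := by
    have h0 := Matrix.aeval_self_charpoly A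
    rw [Polynomial.aeval_eq_sum_range] at h0
    rw [Matrix.charpoly_natDegree_eq_dim, Fintype.card_fin, Finset.sum_range_succ] at h0
    have hc : A.charpoly.coeff n = 1 := by
      have hm := A.charpoly_monic
      have hd : A.charpoly.natDegree = n := by
        rw [Matrix.charpoly_natDegree_eq_dim, Fintype.card_fin]
      rw [Polynomial.Monic, Polynomial.leadingCoeff, hd] at hm
      exact hm
    rw [hc, one_smul] at h0
    have : A ^ n = -∑ i ∈ Finset.range n, A.charpoly.coeff i • A ^ i := by
      linear_combination (norm := module) h0
    rw [this, ← Finset.sum_neg_distrib]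
    congr 1
    ext i
    rw [neg_smul]
  intro k
  induction k using Nat.strong_induction_on with
  | _ k ih =>
    by_cases hk : k < n
    · exact h k hk
    · push_neg at hk
      have hkn : k = (k - n) + n := by omega
      rw [hkn, pow_add, hCH, Matrix.mul_sum, Matrix.mul_sum, sum_mulVec]
      refine Finset.sum_eq_zero fun i hi => ?_
      have hlt : (k - n) + i < k := by
        have := Finset.mem_range.mp hi
        omega
      have := ih ((k - n) + i) hlt
      have hsm : C * (A ^ (k - n) * -A.charpoly.coeff i • A ^ i)
          = -A.charpoly.coeff i • (C * A ^ (k - n + i)) := by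
        rw [Matrix.mul_smul, Matrix.mul_smul, ← Matrix.mul_assoc, Matrix.mul_assoc, ← pow_add]
      rw [hsm, Matrix.smul_mulVec, this, smul_zero]




variable {p : ℕ}

/-- `X ↦ (M * X) *ᵥ v` as a linear map. -/
def mulMulVecLin (M : Matrix (Fin p) (Fin n) ℝ) (v : Fin n → ℝ) :
    Matrix (Fin n) (Fin n) ℝ →ₗ[ℝ] (Fin p → ℝ) where
  toFun X := (M * X) *ᵥ v
  map_add' X Y := by simp only [Matrix.mul_add, Matrix.add_mulVec]
  map_smul' c X := by simp only [Matrix.mul_smul, Matrix.smul_mulVec, RingHom.id_apply]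

lemma mul_exp_mulVec (M : Matrix (Fin p) (Fin n) ℝ) (A : Matrix (Fin n) (Fin n) ℝ)
    (v : Fin n → ℝ) (τ : ℝ) :
    (M * exp (τ • A)) *ᵥ v = ∑' k : ℕ, ((k ! : ℝ)⁻¹ * τ ^ k) • ((M * A ^ k) *ᵥ v) := by
  have hsum : HasSum (fun k : ℕ => ((k ! : ℝ)⁻¹) • (τ • A) ^ k) (exp (τ • A)) := by
    rw [exp_eq_tsum ℝ]
    exact (expSeries_summable' (𝕂 := ℝ) (τ • A)).hasSum
  let L : Matrix (Fin n) (Fin n) ℝ →L[ℝ] (Fin p → ℝ) :=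
    ⟨mulMulVecLin M v, (mulMulVecLin M v).continuous_of_finiteDimensional⟩
  have h2 := hsum.mapL L
  have h3 : ∀ k : ℕ, L (((k ! : ℝ)⁻¹) • (τ • A) ^ k)
      = ((k ! : ℝ)⁻¹ * τ ^ k) • ((M * A ^ k) *ᵥ v) := by
    intro k
    rw [L.map_smul, smul_pow]
    have : L (τ ^ k • A ^ k) = τ ^ k • ((M * A ^ k) *ᵥ v) := by
      rw [L.map_smul]
      rfl
    rw [this, smul_smul]
  simp only [h3] at h2
  have : L (exp (τ • A)) = (M * exp (τ • A)) *ᵥ v := rfl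
  rw [← this]
  exact h2.tsum_eq.symm

lemma mul_exp_mulVec_eq_zero {M : Matrix (Fin p) (Fin n) ℝ} {A : Matrix (Fin n) (Fin n) ℝ}
    {v : Fin n → ℝ} (h : ∀ k : ℕ, (M * A ^ k) *ᵥ v = 0) (τ : ℝ) :
    (M * exp (τ • A)) *ᵥ v = 0 := by
  rw [mul_exp_mulVec]
  simp [h]



lemma cont_exp : Continuous fun τ : ℝ => exp (τ • A) :=
  exp_continuous.comp (continuous_id.smul continuous_const)

lemma cont_integrand : Continuous fun τ : ℝ =>
    exp (τ • Aᵀ) * Cᵀ * C * exp (τ • A) :=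
  (((cont_exp Aᵀ).matrix_mul continuous_const).matrix_mul continuous_const).matrix_mul
    (cont_exp A)

lemma cont_mulVec_apply {p p' : ℕ} {f : ℝ → Matrix (Fin p) (Fin p') ℝ} (hf : Continuous f)
    (v : Fin p' → ℝ) (i : Fin p) : Continuous fun τ => (f τ *ᵥ v) i := by
  simp only [Matrix.mulVec, dotProduct]
  exact continuous_finset_sum _ fun j _ => (hf.matrix_elem i j).mul continuous_const

lemma exp_transpose_smul (τ : ℝ) : (exp (τ • Aᵀ))ᵀ = exp (τ • A) := by
  rw [← Matrix.transpose_smul, Matrix.exp_transpose (τ • A), Matrix.transpose_transpose]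

lemma obsGram_symm (t₁ : ℝ) : (obsGram A C t₁)ᵀ = obsGram A C t₁ := by
  have hsymm : ∀ τ : ℝ, (exp (τ • Aᵀ) * Cᵀ * C * exp (τ • A))ᵀ
      = exp (τ • Aᵀ) * Cᵀ * C * exp (τ • A) := by
    intro τ
    rw [Matrix.transpose_mul, Matrix.transpose_mul, Matrix.transpose_mul,
      Matrix.transpose_transpose, exp_transpose_smul]
    rw [← Matrix.transpose_smul, Matrix.exp_transpose]
    rw [Matrix.mul_assoc, Matrix.mul_assoc, ← Matrix.mul_assoc (Cᵀ)]
  ext i j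
  show obsGram A C t₁ j i = obsGram A C t₁ i j
  have hptwise : ∀ τ : ℝ, (exp (τ • Aᵀ) * Cᵀ * C * exp (τ • A)) j i
      = (exp (τ • Aᵀ) * Cᵀ * C * exp (τ • A)) i j := by
    intro τ
    conv_rhs => rw [← hsymm τ]
    rw [Matrix.transpose_apply]
  unfold obsGram
  simp only [hptwise]

lemma obsGram_mulVec_apply (t₁ : ℝ) (v : Fin n → ℝ) (i : Fin n) :
    (obsGram A C t₁ *ᵥ v) i
      = ∫ τ in (0:ℝ)..t₁, ((exp (τ • Aᵀ) * Cᵀ * C * exp (τ • A)) *ᵥ v) i := by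
  show (∑ j, obsGram A C t₁ i j * v j) = _
  have hint : ∀ j : Fin n, IntervalIntegrable
      (fun τ => (exp (τ • Aᵀ) * Cᵀ * C * exp (τ • A)) i j * v j) MeasureTheory.volume 0 t₁ :=
    fun j => (((cont_integrand A C).matrix_elem i j).mul continuous_const).intervalIntegrable _ _
  calc (∑ j, obsGram A C t₁ i j * v j)
      = ∑ j, ∫ τ in (0:ℝ)..t₁, (exp (τ • Aᵀ) * Cᵀ * C * exp (τ • A)) i j * v j := by
        refine Finset.sum_congr rfl fun j _ => ?_
        show (∫ τ in (0:ℝ)..t₁, (exp (τ • Aᵀ) * Cᵀ * C * exp (τ • A)) i j) * v j = _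
        rw [← intervalIntegral.integral_mul_const]
    _ = ∫ τ in (0:ℝ)..t₁, ∑ j, (exp (τ • Aᵀ) * Cᵀ * C * exp (τ • A)) i j * v j := by
        rw [intervalIntegral.integral_finset_sum]
        exact fun j _ => hint j
    _ = _ := rfl

lemma obsMat_mulVec_eq_zero_iff (v : Fin n → ℝ) :
    obsMat C A *ᵥ v = 0 ↔ ∀ k : ℕ, k < n → (C * A ^ k) *ᵥ v = 0 := by
  constructor
  · intro h k hk
    funext i
    exact congrFun h (⟨k, hk⟩, i)
  · intro h
    funext ki
    exact congrFun (h ki.1 ki.1.2) ki.2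

lemma gram_mulVec_eq_zero_of_obs (t₁ : ℝ) {v : Fin n → ℝ} (hv : obsMat C A *ᵥ v = 0) :
    obsGram A C t₁ *ᵥ v = 0 := by
  have hall : ∀ k : ℕ, (C * A ^ k) *ᵥ v = 0 :=
    ch_extend A C v ((obsMat_mulVec_eq_zero_iff A C v).mp hv)
  have hCv : ∀ τ : ℝ, (C * exp (τ • A)) *ᵥ v = 0 := mul_exp_mulVec_eq_zero hall
  funext i
  rw [obsGram_mulVec_apply]
  have hzero : ∀ τ : ℝ, ((exp (τ • Aᵀ) * Cᵀ * C * exp (τ • A)) *ᵥ v) i = 0 := by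
    intro τ
    have : exp (τ • Aᵀ) * Cᵀ * C * exp (τ • A)
        = (exp (τ • Aᵀ) * Cᵀ) * (C * exp (τ • A)) := by
      simp only [Matrix.mul_assoc]
    rw [this, ← Matrix.mulVec_mulVec, hCv τ, Matrix.mulVec_zero]
    rfl
  simp only [hzero]
  simp

lemma obs_mulVec_eq_zero_of_gram {t₁ : ℝ} (ht₁ : 0 < t₁) {v : Fin n → ℝ}
    (hv : obsGram A C t₁ *ᵥ v = 0) : obsMat C A *ᵥ v = 0 := by
  classical
  set g : ℝ → Fin q → ℝ := fun τ => (C * exp (τ • A)) *ᵥ v with hg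
  -- the quadratic form of the integrand is ‖g τ‖²
  have hquad : ∀ τ : ℝ, v ⬝ᵥ ((exp (τ • Aᵀ) * Cᵀ * C * exp (τ • A)) *ᵥ v)
      = g τ ⬝ᵥ g τ := by
    intro τ
    have hsplit : exp (τ • Aᵀ) * Cᵀ * C * exp (τ • A)
        = (exp (τ • Aᵀ) * Cᵀ) * (C * exp (τ • A)) := by
      simp only [Matrix.mul_assoc]
    rw [hsplit, ← Matrix.mulVec_mulVec]
    rw [Matrix.dotProduct_mulVec, ← Matrix.mulVec_transpose]
    congr 1
    rw [Matrix.transpose_mul, Matrix.transpose_transpose, exp_transpose_smul]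
  -- continuity of g
  have hgc : Continuous g := by
    have hCE : Continuous fun τ : ℝ => C * exp (τ • A) :=
      Continuous.matrix_mul continuous_const (cont_exp A)
    exact continuous_pi fun i => cont_mulVec_apply hCE v i
  have hφc : Continuous fun τ => g τ ⬝ᵥ g τ :=
    continuous_finset_sum _ fun i _ =>
      ((continuous_apply i).comp hgc).mul ((continuous_apply i).comp hgc)
  -- ∫ ‖g‖² = 0
  have hint : (∫ τ in (0:ℝ)..t₁, g τ ⬝ᵥ g τ) = 0 := by
    have h1 : ∀ i : Fin n, (obsGram A C t₁ *ᵥ v) i = 0 := fun i => congrFun hv i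
    have h2 : v ⬝ᵥ (obsGram A C t₁ *ᵥ v) = 0 := by rw [hv, dotProduct_zero]
    have h3 : v ⬝ᵥ (obsGram A C t₁ *ᵥ v)
        = ∫ τ in (0:ℝ)..t₁, v ⬝ᵥ ((exp (τ • Aᵀ) * Cᵀ * C * exp (τ • A)) *ᵥ v) := by
      unfold dotProduct
      have hintg : ∀ i : Fin n, IntervalIntegrable
          (fun τ => v i * ((exp (τ • Aᵀ) * Cᵀ * C * exp (τ • A)) *ᵥ v) i)
          MeasureTheory.volume 0 t₁ := by
        intro i
        apply Continuous.intervalIntegrable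
        exact continuous_const.mul (cont_mulVec_apply (cont_integrand A C) v i)
      calc (∑ i, v i * (obsGram A C t₁ *ᵥ v) i)
          = ∑ i, ∫ τ in (0:ℝ)..t₁,
              v i * ((exp (τ • Aᵀ) * Cᵀ * C * exp (τ • A)) *ᵥ v) i := by
            refine Finset.sum_congr rfl fun i _ => ?_
            rw [obsGram_mulVec_apply, ← intervalIntegral.integral_const_mul]
        _ = ∫ τ in (0:ℝ)..t₁, ∑ i,
              v i * ((exp (τ • Aᵀ) * Cᵀ * C * exp (τ • A)) *ᵥ v) i := by
            rw [intervalIntegral.integral_finset_sum]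
            exact fun i _ => hintg i
        _ = _ := rfl
    have h4 : (∫ τ in (0:ℝ)..t₁,
        v ⬝ᵥ ((exp (τ • Aᵀ) * Cᵀ * C * exp (τ • A)) *ᵥ v)) = 0 := h3.symm.trans h2
    refine Eq.trans ?_ h4
    exact intervalIntegral.integral_congr fun τ _ => (hquad τ).symm
  have hnonneg : ∀ τ : ℝ, 0 ≤ g τ ⬝ᵥ g τ :=
    fun τ => Finset.sum_nonneg fun i _ => mul_self_nonneg _
  -- hence g vanishes on [0, t₁]
  have hg0 : ∀ τ ∈ Set.Icc (0:ℝ) t₁, g τ = 0 := by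
    intro τ hτ
    by_contra hne
    have hpos : 0 < ∫ τ in (0:ℝ)..t₁, g τ ⬝ᵥ g τ := by
      apply intervalIntegral.integral_pos ht₁ hφc.continuousOn
        (fun x _ => hnonneg x)
      exact ⟨τ, hτ, lt_of_le_of_ne (hnonneg τ)
        (fun h => hne (dotProduct_self_eq_zero.mp h.symm))⟩
    rw [hint] at hpos
    exact lt_irrefl 0 hpos
  -- derivative bootstrap on the open interval
  have hind : ∀ k : ℕ, ∀ τ ∈ Set.Ioo (0:ℝ) t₁, (C * A ^ k * exp (τ • A)) *ᵥ v = 0 := by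
    intro k
    induction k with
    | zero =>
      intro τ hτ
      have := hg0 τ (Set.Ioo_subset_Icc_self hτ)
      simpa [pow_zero, Matrix.mul_one] using this
    | succ k ih =>
      intro τ hτ
      -- the function s ↦ (C * A^k * exp(s•A)) *ᵥ v vanishes near τ
      let L : Matrix (Fin n) (Fin n) ℝ →L[ℝ] (Fin q → ℝ) :=
        ⟨mulMulVecLin (C * A ^ k) v, (mulMulVecLin (C * A ^ k) v).continuous_of_finiteDimensional⟩
      have hf : HasDerivAt (fun s : ℝ => exp (s • A)) (exp (τ • A) * A) τ :=
        hasDerivAt_exp_smul_const A τ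
      have hLf : HasDerivAt (fun s : ℝ => L (exp (s • A))) (L (exp (τ • A) * A)) τ :=
        L.hasFDerivAt.comp_hasDerivAt τ hf
      have hev : (fun s : ℝ => L (exp (s • A))) =ᶠ[nhds τ] fun _ => (0 : Fin q → ℝ) := by
        filter_upwards [isOpen_Ioo.mem_nhds hτ] with s hs
        exact ih s hs
      have h0 : HasDerivAt (fun s : ℝ => L (exp (s • A))) 0 τ :=
        (hasDerivAt_const τ (0 : Fin q → ℝ)).congr_of_eventuallyEq hev
      have huniq : L (exp (τ • A) * A) = 0 := hLf.unique h0
      have hcomm : A * exp (τ • A) = exp (τ • A) * A :=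
        (((Commute.refl A).smul_right τ).exp_right).eq
      have : L (exp (τ • A) * A) = (C * A ^ (k + 1) * exp (τ • A)) *ᵥ v := by
        show (C * A ^ k * (exp (τ • A) * A)) *ᵥ v = _
        rw [← hcomm, pow_succ]
        simp only [Matrix.mul_assoc]
      rw [← this, huniq]
  -- transfer back to τ = 0 through the group property of exp
  have hτ₀ : t₁ / 2 ∈ Set.Ioo (0:ℝ) t₁ := ⟨by linarith, by linarith⟩
  set w : Fin n → ℝ := exp ((t₁ / 2) • A) *ᵥ v with hw
  have hwk : ∀ k : ℕ, (C * A ^ k) *ᵥ w = 0 := by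
    intro k
    rw [hw, Matrix.mulVec_mulVec]
    exact hind k _ hτ₀
  have hjk : ∀ j k : ℕ, ((C * A ^ j) * A ^ k) *ᵥ w = 0 := by
    intro j k
    rw [Matrix.mul_assoc, ← pow_add]
    exact hwk (j + k)
  have hj : ∀ j : ℕ, (C * A ^ j) *ᵥ v = 0 := by
    intro j
    have h5 : (C * A ^ j * exp ((-(t₁ / 2)) • A)) *ᵥ w = 0 :=
      mul_exp_mulVec_eq_zero (hjk j) _
    have hinv : exp ((-(t₁ / 2)) • A) * exp ((t₁ / 2) • A) = 1 := by
      rw [← Matrix.exp_add_of_commute _ _ (((Commute.refl A).smul_left _).smul_right _)]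
      rw [← add_smul, neg_add_cancel, zero_smul, NormedSpace.exp_zero]
    have : (C * A ^ j) *ᵥ v
        = (C * A ^ j * exp ((-(t₁ / 2)) • A)) *ᵥ w := by
      rw [hw, Matrix.mulVec_mulVec, Matrix.mul_assoc, hinv, Matrix.mul_one]
    rw [this, h5]
  rw [obsMat_mulVec_eq_zero_iff]
  exact fun k _ => hj k


end Analytic

end StrongDualityAux

open StrongDualityAux LinearMap Module Submodule in
/-- **Strong duality (Theorem 2).** Suppose `rank(F) = r` and the images `F(Im W(t₁))`
and `F(Ker W(t₁))` are orthogonal in `ℝ^r` (Euclidean inner product). Then `(C, A; F)`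
is functionally observable (`rank([O; F]) = rank(O)`) if and only if the dual system
`(Aᵀ, Cᵀ; F)` is output controllable (`rank(F·Oᵀ) = rank(F)`). -/
theorem strong_duality {n q r : ℕ}
    (A : Matrix (Fin n) (Fin n) ℝ) (C : Matrix (Fin q) (Fin n) ℝ)
    (F : Matrix (Fin r) (Fin n) ℝ) (t₁ : ℝ) (ht₁ : 0 < t₁)
    (hF : F.rank = r)
    (horth : ∀ u v : Fin n → ℝ, (obsGram A C t₁).mulVec v = 0 →
      F.mulVec ((obsGram A C t₁).mulVec u) ⬝ᵥ F.mulVec v = 0) :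
    (Matrix.fromRows (obsMat C A) F).rank = (obsMat C A).rank ↔
      (F * (obsMat C A)ᵀ).rank = F.rank := by
  classical
  set O := obsMat C A with hO
  set W := obsGram A C t₁ with hW
  have hkerWO : ker W.mulVecLin = ker O.mulVecLin := by
    ext v
    simp only [LinearMap.mem_ker, Matrix.mulVecLin_apply]
    constructor
    · exact obs_mulVec_eq_zero_of_gram A C ht₁
    · exact gram_mulVec_eq_zero_of_obs A C t₁
  have hrangeO : range Oᵀ.mulVecLin = polar (ker O.mulVecLin) :=
    range_transpose_eq_polar_ker O
  have hrangeW : range W.mulVecLin = polar (ker O.mulVecLin) := by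
    have h := range_transpose_eq_polar_ker W
    rw [hkerWO] at h
    rw [← h]
    rw [hW, obsGram_symm A C t₁]
  have hrWO : range W.mulVecLin = range Oᵀ.mulVecLin := by rw [hrangeW, hrangeO]
  rw [rank_fromRows_eq_iff O F, rank_mul_transpose_eq_iff O F hF]
  constructor
  · intro h
    have h1 : range Fᵀ.mulVecLin ≤ range Oᵀ.mulVecLin := by
      rw [range_transpose_eq_polar_ker F, hrangeO]
      exact polar_antitone h
    have h2 : Submodule.map F.mulVecLin (range Fᵀ.mulVecLin) = ⊤ := by
      apply Submodule.eq_top_of_finrank_eq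
      have heq : Submodule.map F.mulVecLin (range Fᵀ.mulVecLin)
          = range (F * Fᵀ).mulVecLin := by
        rw [Matrix.mulVecLin_mul, LinearMap.range_comp]
      rw [heq]
      show (F * Fᵀ).rank = _
      rw [Matrix.rank_self_mul_transpose, hF, Module.finrank_fin_fun]
    apply top_unique
    rw [← h2]
    exact Submodule.map_mono h1
  · intro h v hv
    simp only [LinearMap.mem_ker, Matrix.mulVecLin_apply] at hv ⊢
    have hWv : W *ᵥ v = 0 := gram_mulVec_eq_zero_of_obs A C t₁ hv
    have hmem : F *ᵥ v ∈ Submodule.map F.mulVecLin (range W.mulVecLin) := by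
      rw [hrWO, h]
      trivial
    obtain ⟨x, ⟨u, hu⟩, hx⟩ := hmem
    have hFWu : F *ᵥ (W *ᵥ u) = F *ᵥ v := by
      rw [← hx, ← hu]
      rfl
    have hzero : (F *ᵥ v) ⬝ᵥ (F *ᵥ v) = 0 := by
      nth_rewrite 1 [← hFWu]
      exact horth u v hWv
    exact dotProduct_self_eq_zero.mp hzero
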